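/- Let w ∈ ℝ^n with ‖w‖₁ ≤ 1, x ∈ ℝ^n with ‖x‖_∞ ≤ 1, ε, γ > 0, δ ∈ (0,1]. Let ŵᵢ = zᵢwᵢ/pᵢ with independent zᵢ ∼ Bern(pᵢ) and pᵢ = |wᵢ|(1+ε)²/(δγ²) (assumed ≤ 1). Then Var(⟨ŵ, x⟩ - ε‖ŵ‖₁) ≤ δγ², and consequently by Chebyshev's inequality ℙ[|(⟨ŵ,x⟩ - ε‖ŵ‖₁) - (⟨w,x⟩ - ε‖w‖₁)| > γ] ≤ δ. -/

import Mathlib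

open MeasureTheory ProbabilityTheory

theorem stmt13 {n : ℕ} {Ω : Type*} [MeasureSpace Ω] [IsProbabilityMeasure (ℙ : Measure Ω)]
    (w x : Fin n → ℝ) (hw : ∑ i, |w i| ≤ 1) (hx : ∀ i, |x i| ≤ 1)
    (ε γ δ : ℝ) (hε : 0 < ε) (hγ : 0 < γ) (hδ : 0 < δ ∧ δ ≤ 1)
    (p : Fin n → ℝ) (hp : ∀ i, p i = |w i| * (1 + ε) ^ 2 / (δ * γ ^ 2))
    (hp1 : ∀ i, p i ≤ 1)
    (z : Fin n → Ω → ℝ)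
    (hz01 : ∀ i ω, z i ω = 0 ∨ z i ω = 1)
    (hmeas : ∀ i, Measurable (z i))
    (hmean : ∀ i, ∫ ω, z i ω = p i)
    (hindep : iIndepFun z ℙ) :
    variance (fun ω =>
        (∑ i, (if w i = 0 then 0 else z i ω * w i / p i) * x i) -
          ε * ∑ i, |if w i = 0 then 0 else z i ω * w i / p i|) ℙ ≤ δ * γ ^ 2 ∧
    ℙ {ω | γ <
        |((∑ i, (if w i = 0 then 0 else z i ω * w i / p i) * x i) -
            ε * ∑ i, |if w i = 0 then 0 else z i ω * w i / p i|) -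
          ((∑ i, w i * x i) - ε * ∑ i, |w i|)|} ≤ ENNReal.ofReal δ := by
  obtain ⟨hδ0, hδ1⟩ := hδ
  have hδγ : 0 < δ * γ ^ 2 := by positivity
  set q : Fin n → ℝ := fun i => if w i = 0 then 0 else (w i * x i - ε * |w i|) / p i with hq
  -- positivity of p i when w i ≠ 0
  have hppos : ∀ i, w i ≠ 0 → 0 < p i := by
    intro i hwi
    rw [hp i]
    have : 0 < |w i| := abs_pos.2 hwi
    positivity
  -- pointwise rewrite of the random variable
  have hXeq : ∀ ω, ((∑ i, (if w i = 0 then 0 else z i ω * w i / p i) * x i) -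
      ε * ∑ i, |if w i = 0 then 0 else z i ω * w i / p i|)
      = ∑ i, q i * z i ω := by
    intro ω
    rw [Finset.mul_sum, ← Finset.sum_sub_distrib]
    refine Finset.sum_congr rfl fun i _ => ?_
    by_cases hwi : w i = 0
    · simp [hq, hwi]
    · have hpi := hppos i hwi
      have hz : z i ω = 0 ∨ z i ω = 1 := hz01 i ω
      simp only [hq, hwi, if_false]
      rcases hz with h | h <;> rw [h]
      · simp
      · rw [one_mul, mul_one, abs_div, abs_of_pos hpi]
        field_simp
  have hXfun : (fun ω => ((∑ i, (if w i = 0 then 0 else z i ω * w i / p i) * x i) -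
      ε * ∑ i, |if w i = 0 then 0 else z i ω * w i / p i|))
      = fun ω => ∑ i, q i * z i ω := funext hXeq
  -- Memℒp facts
  have hzbd : ∀ i, ∀ ω, |z i ω| ≤ 1 := by
    intro i ω; rcases hz01 i ω with h | h <;> simp [h]
  have hYmeas : ∀ i, Measurable (fun ω => q i * z i ω) := fun i =>
    (hmeas i).const_mul (q i)
  have hYmem : ∀ i, MemLp (fun ω => q i * z i ω) 2 ℙ := by
    intro i
    refine MemLp.of_bound (hYmeas i).aestronglyMeasurable |q i| (ae_of_all _ fun ω => ?_)
    rw [Real.norm_eq_abs, abs_mul]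
    calc |q i| * |z i ω| ≤ |q i| * 1 := by
          exact mul_le_mul_of_nonneg_left (hzbd i ω) (abs_nonneg _)
      _ = |q i| := mul_one _
  have hzmem : ∀ i, MemLp (z i) 2 ℙ := by
    intro i
    exact MemLp.of_bound (hmeas i).aestronglyMeasurable 1 (ae_of_all _ fun ω => hzbd i ω)
  -- variance of each z i
  have hzsq : ∀ i ω, z i ω ^ 2 = z i ω := by
    intro i ω; rcases hz01 i ω with h | h <;> simp [h]
  have hvarz : ∀ i, variance (z i) ℙ ≤ p i := by
    intro i
    rw [variance_eq_sub (hzmem i)]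
    have : (fun ω => z i ω ^ 2) = z i := funext (hzsq i)
    have h2 : ∫ ω, (z i ω) ^ 2 = p i := by rw [show (fun ω => z i ω ^ 2) = z i from this]; exact hmean i
    simp only [Pi.pow_apply]
    rw [h2, hmean i]
    nlinarith [sq_nonneg (p i), hmean i]
  have hvarznn : ∀ i, 0 ≤ variance (z i) ℙ := fun i => variance_nonneg _ _
  -- variance of sum
  have hindepY : Set.Pairwise ↑(Finset.univ : Finset (Fin n))
      (fun i j => IndepFun (fun ω => q i * z i ω) (fun ω => q j * z j ω) ℙ) := by
    intro i _ j _ hij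
    exact (hindep.indepFun hij).comp (measurable_const_mul (q i)) (measurable_const_mul (q j))
  have hvarsum : variance (fun ω => ∑ i, q i * z i ω) ℙ = ∑ i, variance (fun ω => q i * z i ω) ℙ := by
    have := IndepFun.variance_sum (μ := ℙ) (X := fun i => fun ω => q i * z i ω)
      (s := Finset.univ) (fun i _ => hYmem i) hindepY
    rw [← this]
    congr 1
    ext ω
    simp
  -- per-coordinate bound
  have hbound : ∀ i, variance (fun ω => q i * z i ω) ℙ ≤ |w i| * (δ * γ ^ 2) := by
    intro i
    have : variance (fun ω => q i * z i ω) ℙ = q i ^ 2 * variance (z i) ℙ := by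
      have := variance_const_mul (q i) (z i) ℙ
      simpa using this
    rw [this]
    by_cases hwi : w i = 0
    · simp [hq, hwi]
    · have hpi := hppos i hwi
      have h1 : q i ^ 2 * variance (z i) ℙ ≤ q i ^ 2 * p i :=
        mul_le_mul_of_nonneg_left (hvarz i) (sq_nonneg _)
      refine h1.trans ?_
      have hq2 : q i ^ 2 * p i = (w i * x i - ε * |w i|) ^ 2 / p i := by
        simp only [hq, hwi, if_false]
        field_simp
      rw [hq2, hp i]
      rw [div_div_eq_mul_div]
      rw [div_le_iff₀ (by positivity : (0:ℝ) < |w i| * (1 + ε) ^ 2)]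
      have habs' : |w i * x i| ≤ |w i| := by
        rw [abs_mul]
        nlinarith [abs_nonneg (w i), hx i, abs_nonneg (x i)]
      have h1' : w i * x i ≤ |w i| := le_trans (le_abs_self _) habs'
      have h2' : -|w i| ≤ w i * x i := by
        have := neg_abs_le (w i * x i); linarith
      have key : (w i * x i - ε * |w i|) ^ 2 ≤ |w i| ^ 2 * (1 + ε) ^ 2 := by
        nlinarith [mul_nonneg (sub_nonneg.2 h1') (by linarith : (0:ℝ) ≤ |w i| + w i * x i),
          mul_nonneg (mul_nonneg hε.le (abs_nonneg (w i)))
            (by linarith : (0:ℝ) ≤ |w i| + w i * x i)]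
      calc (w i * x i - ε * |w i|) ^ 2 * (δ * γ ^ 2) ≤ |w i| ^ 2 * (1 + ε) ^ 2 * (δ * γ ^ 2) :=
            mul_le_mul_of_nonneg_right key hδγ.le
        _ = |w i| * (δ * γ ^ 2) * (|w i| * (1 + ε) ^ 2) := by ring
  -- variance bound
  have hvar : variance (fun ω => ∑ i, q i * z i ω) ℙ ≤ δ * γ ^ 2 := by
    rw [hvarsum]
    calc ∑ i, variance (fun ω => q i * z i ω) ℙ ≤ ∑ i, |w i| * (δ * γ ^ 2) :=
          Finset.sum_le_sum fun i _ => hbound i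
      _ = (∑ i, |w i|) * (δ * γ ^ 2) := by rw [← Finset.sum_mul]
      _ ≤ 1 * (δ * γ ^ 2) := mul_le_mul_of_nonneg_right hw hδγ.le
      _ = δ * γ ^ 2 := one_mul _
  constructor
  · rw [hXfun]; exact hvar
  · -- Chebyshev
    have hXmem : MemLp (fun ω => ∑ i, q i * z i ω) 2 ℙ := by
      have := memLp_finset_sum' (μ := ℙ) Finset.univ (f := fun i => fun ω => q i * z i ω)
        (fun i _ => hYmem i)
      convert this using 1
      ext ω; simp
    -- mean
    have hmeanX : (∫ ω, ∑ i, q i * z i ω) = (∑ i, w i * x i) - ε * ∑ i, |w i| := by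
      rw [integral_finset_sum _ (fun i _ => ((hYmem i).integrable one_le_two))]
      have : ∀ i, (∫ ω, q i * z i ω) = w i * x i - ε * |w i| := by
        intro i
        rw [integral_const_mul, hmean i]
        by_cases hwi : w i = 0
        · simp [hq, hwi]
        · have hpi := hppos i hwi
          simp only [hq, hwi, if_false]
          field_simp
      rw [Finset.sum_congr rfl fun i _ => this i, Finset.sum_sub_distrib, ← Finset.mul_sum]
    have hcheb := meas_ge_le_variance_div_sq (μ := ℙ) hXmem hγ
    calc ℙ {ω | γ < |((∑ i, (if w i = 0 then 0 else z i ω * w i / p i) * x i) -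
            ε * ∑ i, |if w i = 0 then 0 else z i ω * w i / p i|) -
          ((∑ i, w i * x i) - ε * ∑ i, |w i|)|}
        ≤ ℙ {ω | γ ≤ |(∑ i, q i * z i ω) - (∫ ω, ∑ i, q i * z i ω)|} := by
          apply measure_mono
          intro ω hω
          simp only [Set.mem_setOf_eq] at hω ⊢
          rw [hXeq ω] at hω
          rw [hmeanX]
          exact hω.le
      _ ≤ ENNReal.ofReal (variance (fun ω => ∑ i, q i * z i ω) ℙ / γ ^ 2) := hcheb
      _ ≤ ENNReal.ofReal δ := by
          apply ENNReal.ofReal_le_ofReal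
          rw [div_le_iff₀ (by positivity : (0:ℝ) < γ ^ 2)]
          linarith [hvar]
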